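/- Let (g, B) be a cyclic metric Lie algebra with Levi decomposition g = s + r, and let C(nil g) denote the center of the nilradical of g. Then the subspace [s, C(nil g)] is isotropic with respect to B, i.e., B([s, C(nil g)], [s, C(nil g)]) = 0. -/

import Mathlib

/-- Let (g, B) be a cyclic metric Lie algebra with Levi decomposition
g = s + r (s a semisimple Levi factor, r = radical g), and let n be the nilradical
(the largest nilpotent ideal) of g.  Then the subspace [s, C(n)] is isotropic:
B([s, C(n)], [s, C(n)]) = 0, where C(n) is the center of n. -/
theorem bracket_semisimple_center_nilradical_isotropic
    {F L : Type*} [Field F] [LieRing L] [LieAlgebra F L] [FiniteDimensional F L]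
    (hchar2 : ringChar F ≠ 2) (hchar3 : ringChar F ≠ 3)
    (s : LieSubalgebra F L) [LieAlgebra.IsSemisimple F s]
    (hlevi : IsCompl s.toSubmodule (LieAlgebra.radical F L).toSubmodule)
    (n : LieIdeal F L) [LieRing.IsNilpotent n]
    (hmax : ∀ I : LieIdeal F L, LieRing.IsNilpotent I → I ≤ n)
    (B : L →ₗ[F] L →ₗ[F] F)
    (hsymm : ∀ x y : L, B x y = B y x)
    (hcyc : ∀ x y z : L, B ⁅x, y⁆ z + B ⁅y, z⁆ x + B ⁅z, x⁆ y = 0) :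
    ∀ x ∈ s, ∀ y ∈ s,
      ∀ u, u ∈ n → (∀ w ∈ n, ⁅u, w⁆ = 0) →
      ∀ v, v ∈ n → (∀ w ∈ n, ⁅v, w⁆ = 0) →
        B ⁅x, u⁆ ⁅y, v⁆ = 0 := by
  have h2 : (2 : F) ≠ 0 := Ring.two_ne_zero hchar2
  -- Identity I1: for `p` central in `n` and `q ∈ n`, `B ⁅z,p⁆ q = B ⁅z,q⁆ p`.
  have I1 : ∀ z p q : L, p ∈ n → (∀ w ∈ n, ⁅p, w⁆ = 0) → q ∈ n →
      B ⁅z, p⁆ q = B ⁅z, q⁆ p := by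
    intro z p q hp hpc hq
    have hc := hcyc z p q
    rw [hpc q hq] at hc
    have hskew : B ⁅q, z⁆ p = -B ⁅z, q⁆ p := by
      rw [← lie_skew q z, map_neg, LinearMap.neg_apply]
    rw [hskew] at hc
    simp only [map_zero, LinearMap.zero_apply] at hc
    linear_combination hc
  -- Key lemma: for `a b : L` and `p q` central in `n`, `B ⁅⁅a,b⁆,q⁆ p = 0`.
  have key : ∀ a b p q : L, p ∈ n → (∀ w ∈ n, ⁅p, w⁆ = 0) →
      q ∈ n → (∀ w ∈ n, ⁅q, w⁆ = 0) → B ⁅⁅a, b⁆, q⁆ p = 0 := by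
    intro a b p q hp hpc hq hqc
    -- e1 : B ⁅a,p⁆ ⁅b,q⁆ = B ⁅⁅a,b⁆,q⁆ p + B ⁅b,p⁆ ⁅a,q⁆
    have e1 : B ⁅a, p⁆ ⁅b, q⁆ = B ⁅⁅a, b⁆, q⁆ p + B ⁅b, p⁆ ⁅a, q⁆ := by
      have h1 : B ⁅a, p⁆ ⁅b, q⁆ = B ⁅a, ⁅b, q⁆⁆ p :=
        I1 a p ⁅b, q⁆ hp hpc (n.lie_mem hq)
      have h2' : B ⁅b, p⁆ ⁅a, q⁆ = B ⁅b, ⁅a, q⁆⁆ p :=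
        I1 b p ⁅a, q⁆ hp hpc (n.lie_mem hq)
      have h3 : ⁅a, ⁅b, q⁆⁆ = ⁅⁅a, b⁆, q⁆ + ⁅b, ⁅a, q⁆⁆ := by
        rw [lie_lie]; abel
      rw [h1, h2', h3, map_add, LinearMap.add_apply]
    have e2 : B ⁅a, q⁆ ⁅b, p⁆ = B ⁅⁅a, b⁆, p⁆ q + B ⁅b, q⁆ ⁅a, p⁆ := by
      have h1 : B ⁅a, q⁆ ⁅b, p⁆ = B ⁅a, ⁅b, p⁆⁆ q :=
        I1 a q ⁅b, p⁆ hq hqc (n.lie_mem hp)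
      have h2' : B ⁅b, q⁆ ⁅a, p⁆ = B ⁅b, ⁅a, p⁆⁆ q :=
        I1 b q ⁅a, p⁆ hq hqc (n.lie_mem hp)
      have h3 : ⁅a, ⁅b, p⁆⁆ = ⁅⁅a, b⁆, p⁆ + ⁅b, ⁅a, p⁆⁆ := by
        rw [lie_lie]; abel
      rw [h1, h2', h3, map_add, LinearMap.add_apply]
    -- e3 : B ⁅⁅a,b⁆,q⁆ p = B ⁅⁅a,b⁆,p⁆ q
    have e3 : B ⁅⁅a, b⁆, q⁆ p = B ⁅⁅a, b⁆, p⁆ q := by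
      have hc := hcyc ⁅a, b⁆ q p
      rw [hqc p hp] at hc
      have hskew : B ⁅p, ⁅a, b⁆⁆ q = -B ⁅⁅a, b⁆, p⁆ q := by
        rw [← lie_skew p ⁅a, b⁆, map_neg, LinearMap.neg_apply]
      rw [hskew] at hc
      simp only [map_zero, LinearMap.zero_apply] at hc
      linear_combination hc
    have s1 : B ⁅b, p⁆ ⁅a, q⁆ = B ⁅a, q⁆ ⁅b, p⁆ := hsymm _ _
    have s2 : B ⁅b, q⁆ ⁅a, p⁆ = B ⁅a, p⁆ ⁅b, q⁆ := hsymm _ _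
    have h2B : (2 : F) * B ⁅⁅a, b⁆, q⁆ p = 0 := by
      linear_combination -e1 - e2 - s1 - s2 + e3
    exact (mul_eq_zero.mp h2B).resolve_left h2
  intro x hx y hy u hu huc v hv hvc
  -- `m = ⁅x, u⁆` lies in `n` and is central in `n`.
  set m : L := ⁅x, u⁆ with hm_def
  have hm : m ∈ n := n.lie_mem hu
  have hmc : ∀ w ∈ n, ⁅m, w⁆ = 0 := by
    intro w hw
    rw [hm_def, lie_lie, huc w hw, huc ⁅x, w⁆ (n.lie_mem hw), lie_zero, sub_zero]
  -- Reduce the goal to `B ⁅y, m⁆ v = 0`.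
  have hred : B ⁅x, u⁆ ⁅y, v⁆ = B ⁅y, m⁆ v := by
    rw [hsymm]
    exact I1 y v m hv hvc hm
  rw [hred]
  -- `s` is perfect, hence contained in the span of brackets.
  have hperf : ⁅(⊤ : LieIdeal F s), (⊤ : LieIdeal F s)⁆ = ⊤ := by
    refine le_antisymm le_top ?_
    conv_lhs => rw [← LieAlgebra.IsSemisimple.sSup_atoms_eq_top (R := F) (L := s)]
    apply sSup_le
    intro I hI
    rw [← lie_eq_self_of_isAtom_of_nonabelian I hI
      (LieAlgebra.IsSemisimple.non_abelian_of_isAtom I hI)]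
    exact LieSubmodule.mono_lie le_top le_top
  have hspan : ∀ z : L, z ∈ s →
      z ∈ Submodule.span F {w : L | ∃ a b : L, ⁅a, b⁆ = w} := by
    intro z hz
    have hzmem : (⟨z, hz⟩ : s) ∈ (⊤ : LieIdeal F s) := trivial
    rw [← hperf] at hzmem
    have hzmem' : (⟨z, hz⟩ : s) ∈ Submodule.span F
        {w : s | ∃ a ∈ (⊤ : LieIdeal F s), ∃ b ∈ (⊤ : LieIdeal F s), ⁅a, b⁆ = w} := by
      rw [← LieSubmodule.lieIdeal_oper_eq_linear_span']
      exact (LieSubmodule.mem_toSubmodule _).mpr hzmem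
    have : ∀ w : s, w ∈ Submodule.span F
        {w : s | ∃ a ∈ (⊤ : LieIdeal F s), ∃ b ∈ (⊤ : LieIdeal F s), ⁅a, b⁆ = w} →
        (w : L) ∈ Submodule.span F {w : L | ∃ a b : L, ⁅a, b⁆ = w} := by
      intro w hw
      refine Submodule.span_induction ?_ ?_ ?_ ?_ hw
      · rintro c ⟨a, -, b, -, rfl⟩
        exact Submodule.subset_span ⟨a, b, rfl⟩
      · simp
      · intro c d _ _ hc hd
        rw [Submodule.coe_add]
        exact Submodule.add_mem _ hc hd
      · intro t c _ hc
        have hcoe : ((t • c : s) : L) = t • (c : L) := rfl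
        rw [hcoe]
        exact Submodule.smul_mem _ t hc
    exact this _ hzmem'
  -- The functional `z ↦ B ⁅z, m⁆ v` vanishes on the span of brackets.
  have hvanish : ∀ z ∈ Submodule.span F {w : L | ∃ a b : L, ⁅a, b⁆ = w},
      B ⁅z, m⁆ v = 0 := by
    intro z hz
    refine Submodule.span_induction ?_ ?_ ?_ ?_ hz
    · rintro c ⟨a, b, rfl⟩
      exact key a b v m hv hvc hm hmc
    · simp
    · intro c d _ _ hc hd
      rw [add_lie, map_add, LinearMap.add_apply, hc, hd, add_zero]
    · intro t c _ hc
      rw [smul_lie, map_smul, LinearMap.smul_apply, hc, smul_zero]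
  exact hvanish y (hspan y hy)
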